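/- Let F be a field, let x₁,…,x_N ∈ F be pairwise distinct, let f₁,…,f_β ∈ F be pairwise distinct with x_i ≠ f_j for all i, j, and let C be the N × β matrix with C(i,j) = 1/(x_i − f_j). Let 𝒟 ⊆ {1,…,N} with |𝒟| = d, let J_H ⊆ {1,…,β} with |J_H| = d, and let γ be a positive integer. Then for every matrix M₀ : ({1,…,β} ∖ J_H) × {1,…,γ} → F there exists a unique matrix H : J_H × {1,…,γ} → F such that the β × γ matrix M obtained by filling the rows indexed by {1,…,β} ∖ J_H with M₀ and the rows indexed by J_H with H satisfies C(n,:) · M = 0 (the zero row vector of length γ) for every n ∈ 𝒟. -/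

import Mathlib

open Polynomial Finset

-- Injectivity of the square Cauchy system
theorem cauchy_inj (F : Type*) [Field F] {N β : ℕ}
    (x : Fin N → F) (f : Fin β → F)
    (hx : Function.Injective x) (hf : Function.Injective f)
    (hxf : ∀ i j, x i ≠ f j)
    (𝒟 : Finset (Fin N)) (J_H : Finset (Fin β)) (hcard : J_H.card ≤ 𝒟.card)
    (v : ↥J_H → F)
    (hv : ∀ n ∈ 𝒟, ∑ j : ↥J_H, (x n - f j)⁻¹ * v j = 0) : v = 0 := by
  classical
  funext j₀
  set P : F[X] := ∑ j : ↥J_H, C (v j) * ∏ k ∈ J_H.erase j, (X - C (f k)) with hP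
  have heval : ∀ a : F, P.eval a = ∑ j : ↥J_H, v j * ∏ k ∈ J_H.erase j, (a - f k) := by
    intro a; simp [hP, eval_finset_sum, eval_prod]
  have hroot : ∀ n ∈ 𝒟, P.eval (x n) = 0 := by
    intro n hn
    rw [heval]
    have h0 := hv n hn
    have : ∀ j : ↥J_H, v j * ∏ k ∈ J_H.erase j, (x n - f k)
        = ((x n - f j)⁻¹ * v j) * ∏ k ∈ J_H, (x n - f k) := by
      intro j
      rw [← Finset.mul_prod_erase J_H _ j.2]
      field_simp [sub_ne_zero.mpr (hxf n j)]
    rw [Finset.sum_congr rfl fun j _ => this j, ← Finset.sum_mul, h0, zero_mul]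
  have hdeg : P.natDegree < 𝒟.card := by
    have h1 : 1 ≤ J_H.card := Finset.card_pos.mpr ⟨j₀, j₀.2⟩
    have hle : P.natDegree ≤ J_H.card - 1 := by
      refine natDegree_sum_le_of_forall_le _ _ ?_
      intro j _
      refine (natDegree_C_mul_le _ _).trans ?_
      refine (natDegree_prod_le _ _).trans ?_
      rw [← Finset.card_erase_of_mem j.2, Finset.card_eq_sum_ones]
      exact Finset.sum_le_sum fun k _ => natDegree_X_sub_C_le _
    exact lt_of_le_of_lt hle (lt_of_lt_of_le (Nat.sub_lt (lt_of_lt_of_le one_pos h1) one_pos) hcard)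
  have hP0 : P = 0 := by
    apply Polynomial.eq_zero_of_natDegree_lt_card_of_eval_eq_zero' P (𝒟.image x)
    · intro a ha
      obtain ⟨n, hn, rfl⟩ := Finset.mem_image.mp ha
      exact hroot n hn
    · rwa [Finset.card_image_of_injective _ hx]
  have := heval (f j₀)
  rw [hP0, eval_zero] at this
  have hsum : ∑ j : ↥J_H, v j * ∏ k ∈ J_H.erase j, (f j₀ - f k)
      = v j₀ * ∏ k ∈ J_H.erase j₀, (f j₀ - f k) := by
    refine Finset.sum_eq_single j₀ (fun j _ hj => ?_) (by simp)
    have hmem : (j₀ : Fin β) ∈ J_H.erase j := by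
      refine Finset.mem_erase.mpr ⟨?_, j₀.2⟩
      exact fun h => hj (Subtype.ext h.symm)
    rw [Finset.prod_eq_zero hmem (by simp), mul_zero]
  rw [hsum] at this
  have hprod : ∏ k ∈ J_H.erase j₀, ((f j₀ : F) - f k) ≠ 0 := by
    refine Finset.prod_ne_zero_iff.mpr fun k hk => ?_
    exact sub_ne_zero.mpr fun h => (Finset.mem_erase.mp hk).1 (hf h.symm)
  have : v j₀ = 0 := by
    rcases mul_eq_zero.mp this.symm with h | h
    · exact h
    · exact absurd h hprod
  simpa using this

/-- Key construction step for the update operation: for any choice of the rows of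
`M` outside `J_H`, there is a unique way to fill in the rows indexed by `J_H`
(the blocks `H`) so that `C(n,:) · M = 0` for every dropout server `n ∈ 𝒟`, where
`C` is the `N × β` Cauchy matrix with entries `1/(x_i - f_j)`. -/
theorem stmt_16 (F : Type*) [Field F] (N β d γ : ℕ) (hγ : 0 < γ)
    (x : Fin N → F) (f : Fin β → F)
    (hx : Function.Injective x) (hf : Function.Injective f)
    (hxf : ∀ i j, x i ≠ f j)
    (𝒟 : Finset (Fin N)) (h𝒟 : 𝒟.card = d)
    (J_H : Finset (Fin β)) (hJ : J_H.card = d)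
    (M₀ : Fin β → Fin γ → F) :
    ∃! M : Fin β → Fin γ → F,
      (∀ j ∉ J_H, M j = M₀ j) ∧
      (∀ n ∈ 𝒟, ∀ c : Fin γ, ∑ j : Fin β, (x n - f j)⁻¹ * M j c = 0) := by
  classical
  set T : (↥J_H → F) →ₗ[F] (↥𝒟 → F) :=
    Matrix.mulVecLin (fun (n : ↥𝒟) (j : ↥J_H) => (x n - f j)⁻¹) with hTdef
  have hT : ∀ (v : ↥J_H → F) (n : ↥𝒟), T v n = ∑ j : ↥J_H, (x (n : Fin N) - f (j : Fin β))⁻¹ * v j := by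
    intro v n
    simp [hTdef, Matrix.mulVec, dotProduct]
    rfl
  have hker : ∀ v, T v = 0 → v = 0 := by
    intro v hv
    refine cauchy_inj F x f hx hf hxf 𝒟 J_H (by rw [hJ, h𝒟]) v ?_
    intro n hn
    have := congrFun hv ⟨n, hn⟩
    rw [hT] at this
    simpa using this
  have hinj : Function.Injective T := by
    intro a b hab
    have := hker (a - b) (by rw [map_sub, hab, sub_self])
    exact sub_eq_zero.mp (by simpa using this)
  have hbij : Function.Bijective T := by
    refine ⟨hinj, ?_⟩
    have : Module.finrank F (↥J_H → F) = Module.finrank F (↥𝒟 → F) := by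
      simp [Module.finrank_pi, hJ, h𝒟]
    exact (LinearMap.injective_iff_surjective_of_finrank_eq_finrank this).mp hinj
  set e := LinearEquiv.ofBijective T hbij with hedef
  set b : Fin γ → (↥𝒟 → F) := fun c n => -∑ j ∈ J_Hᶜ, (x (n : Fin N) - f j)⁻¹ * M₀ j c with hbdef
  -- key identity
  have hiden : ∀ (M : Fin β → Fin γ → F), (∀ j ∉ J_H, M j = M₀ j) →
      ∀ (c : Fin γ) (n : ↥𝒟),
        ∑ j : Fin β, (x (n : Fin N) - f j)⁻¹ * M j c
          = T (fun j : ↥J_H => M j c) n - b c n := by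
    intro M hM c n
    rw [hT, hbdef, ← Finset.sum_add_sum_compl J_H
      (fun j => (x (n : Fin N) - f j)⁻¹ * M j c), ← Finset.sum_coe_sort J_H]
    have : ∑ j ∈ J_Hᶜ, (x (n : Fin N) - f j)⁻¹ * M j c
        = ∑ j ∈ J_Hᶜ, (x (n : Fin N) - f j)⁻¹ * M₀ j c := by
      refine Finset.sum_congr rfl fun j hj => ?_
      rw [hM j (Finset.mem_compl.mp hj)]
    rw [this]
    ring
  have hkey : ∀ (M : Fin β → Fin γ → F), (∀ j ∉ J_H, M j = M₀ j) →
      ((∀ n ∈ 𝒟, ∀ c : Fin γ, ∑ j : Fin β, (x n - f j)⁻¹ * M j c = 0)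
        ↔ ∀ c, T (fun j : ↥J_H => M j c) = b c) := by
    intro M hM
    constructor
    · intro h c
      funext n
      have := h n n.2 c
      rw [hiden M hM c n] at this
      exact sub_eq_zero.mp this
    · intro h n hn c
      rw [show (n : Fin N) = ((⟨n, hn⟩ : ↥𝒟) : Fin N) from rfl,
        hiden M hM c ⟨n, hn⟩, h c, sub_self]
  set H : Fin γ → (↥J_H → F) := fun c => e.symm (b c) with hHdef
  set M : Fin β → Fin γ → F := fun j c => if hj : j ∈ J_H then H c ⟨j, hj⟩ else M₀ j c with hMdef
  have hM0 : ∀ j ∉ J_H, M j = M₀ j := by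
    intro j hj; funext c; simp [hMdef, hj]
  have hres : ∀ c, (fun j : ↥J_H => M j c) = H c := by
    intro c; funext j; simp [hMdef, j.2]
  refine ⟨M, ⟨hM0, ?_⟩, ?_⟩
  · refine (hkey M hM0).mpr fun c => ?_
    rw [hres c]
    have : T (H c) = e (H c) := rfl
    rw [this, hHdef, e.apply_symm_apply]
  · rintro M' ⟨h1, h2⟩
    funext j c
    by_cases hj : j ∈ J_H
    · have hTM' := (hkey M' h1).mp h2 c
      have hTM : T (fun j : ↥J_H => M j c) = b c := by
        rw [hres c]
        have : T (H c) = e (H c) := rfl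
        rw [this, hHdef, e.apply_symm_apply]
      have := hinj (hTM'.trans hTM.symm)
      exact congrFun this ⟨j, hj⟩
    · rw [h1 j hj, (hM0 j hj)]
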